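/- The HDD median is not equivariant under affine transformations: there exist a finite set P ⊆ ℝ², an invertible linear map T : ℝ² → ℝ², and a point q ∈ ℝ² such that q is an HDD median of P, but T(q) is not an HDD median of the image set T(P). -/

import Mathlib

open scoped Classical

/-- The set `S_P` of `d`-element affinely independent subsets of `P`;
each determines an affine hyperplane of `ℝ^d` (its affine span). -/
noncomputable def hddSet (d : ℕ) (P : Finset (EuclideanSpace ℝ (Fin d))) :
    Finset (Finset (EuclideanSpace ℝ (Fin d))) :=
  (P.powersetCard d).filter
    (fun s => AffineIndependent ℝ
      (fun x : (s : Set (EuclideanSpace ℝ (Fin d))) => (x : EuclideanSpace ℝ (Fin d))))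

/-- Hyperplane distance depth: the sum, over all hyperplanes determined by `P`,
of the Euclidean distance from `q` to the hyperplane. -/
noncomputable def hddDepth (d : ℕ) (P : Finset (EuclideanSpace ℝ (Fin d)))
    (q : EuclideanSpace ℝ (Fin d)) : ℝ :=
  ∑ s ∈ hddSet d P,
    Metric.infDist q
      (affineSpan ℝ (s : Set (EuclideanSpace ℝ (Fin d))) : Set (EuclideanSpace ℝ (Fin d)))

open scoped RealInnerProductSpace
open Metric

noncomputable section

local notation "E" => EuclideanSpace ℝ (Fin 2)

def pt (a b : ℝ) : E := (WithLp.equiv 2 (Fin 2 → ℝ)).symm ![a, b]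

@[simp] lemma pt_zero (a b : ℝ) : pt a b 0 = a := rfl
@[simp] lemma pt_one (a b : ℝ) : pt a b 1 = b := rfl

lemma E_ext {v w : E} (h0 : v 0 = w 0) (h1 : v 1 = w 1) : v = w := by
  ext i
  fin_cases i <;> assumption

lemma pt_eta (v : E) : v = pt (v 0) (v 1) := E_ext rfl rfl

lemma inner_pt (x y : E) : ⟪x, y⟫ = x 0 * y 0 + x 1 * y 1 := by
  simp [PiLp.inner_apply, Fin.sum_univ_two, RCLike.inner_apply, mul_comm]

lemma dist_pt (x y : E) : dist x y = Real.sqrt ((x 0 - y 0)^2 + (x 1 - y 1)^2) := by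
  rw [EuclideanSpace.dist_eq, Fin.sum_univ_two]
  simp [Real.dist_eq, sq_abs]

lemma norm_pt (x : E) : ‖x‖ = Real.sqrt ((x 0)^2 + (x 1)^2) := by
  rw [EuclideanSpace.norm_eq, Fin.sum_univ_two]
  simp [sq_abs]

lemma pt_ne_fst {a b c d : ℝ} (h : a ≠ c) : pt a b ≠ pt c d := by
  intro he
  exact h (by rw [← pt_zero a b, he, pt_zero])

lemma pt_ne_snd {a b c d : ℝ} (h : b ≠ d) : pt a b ≠ pt c d := by
  intro he
  exact h (by rw [← pt_one a b, he, pt_one])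

/-- Lower bound on distance to the affine span of two points via a normal functional. -/
lemma infDist_span_pair_ge (p q n : E) (c : ℝ) (hn : ‖n‖ ≤ 1)
    (hp : ⟪p, n⟫ = c) (hq : ⟪q, n⟫ = c) (x : E) :
    ⟪x, n⟫ - c ≤ infDist x (affineSpan ℝ ({p, q} : Set E) : Set E) := by
  by_contra hlt
  push_neg at hlt
  have hne : (affineSpan ℝ ({p, q} : Set E) : Set E).Nonempty :=
    ⟨p, subset_affineSpan ℝ _ (Set.mem_insert _ _)⟩
  obtain ⟨y, hy, hdy⟩ := (infDist_lt_iff hne).mp hlt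
  have hy' : y ∈ affineSpan ℝ ({p, q} : Set E) := hy
  have h2 : (y - p) +ᵥ p ∈ line[ℝ, p, q] := by
    simpa [vadd_eq_add, sub_add_cancel] using hy'
  rw [vadd_left_mem_affineSpan_pair] at h2
  obtain ⟨r, hr⟩ := h2
  have hyc : ⟪y, n⟫ = c := by
    have h6 : ⟪y - p, n⟫ = r * ⟪q - p, n⟫ := by
      rw [← hr, vsub_eq_sub, real_inner_smul_left]
    rw [inner_sub_left, inner_sub_left, hp, hq, sub_self, mul_zero, sub_eq_zero] at h6
    exact h6
  have hle : ⟪x, n⟫ - c ≤ dist x y := by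
    have h3 : ⟪x, n⟫ - c = ⟪x - y, n⟫ := by rw [inner_sub_left, hyc]
    have h4 : ⟪x - y, n⟫ ≤ ‖x - y‖ * ‖n‖ := real_inner_le_norm _ _
    have h5 : ‖x - y‖ * ‖n‖ ≤ ‖x - y‖ * 1 := by
      have := norm_nonneg (x - y)
      nlinarith
    rw [dist_eq_norm]
    linarith
  linarith

lemma infDist_span_pair_le_foot (p q : E) (r : ℝ) (x : E) :
    infDist x (affineSpan ℝ ({p, q} : Set E) : Set E) ≤ dist x (r • (q - p) + p) := by
  apply infDist_le_dist_of_mem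
  have := smul_vsub_vadd_mem_affineSpan_pair (k := ℝ) r p q
  simpa [vsub_eq_sub, vadd_eq_add] using this

lemma infDist_span_pair_left (p q : E) :
    infDist p (affineSpan ℝ ({p, q} : Set E) : Set E) = 0 :=
  infDist_zero_of_mem (left_mem_affineSpan_pair ℝ p q)

lemma infDist_span_pair_right (p q : E) :
    infDist q (affineSpan ℝ ({p, q} : Set E) : Set E) = 0 :=
  infDist_zero_of_mem (right_mem_affineSpan_pair ℝ p q)

lemma pair_indep {p q : E} (h : p ≠ q) :
    AffineIndependent ℝ (fun x : ((({p, q} : Finset E) : Set E)) => (x : E)) := by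
  have h1 := (affineIndependent_of_ne ℝ h).range
  have hs : Set.range ![p, q] = (({p, q} : Finset E) : Set E) := by
    ext z
    simp [Fin.exists_fin_two]
    tauto
  rw [hs] at h1
  exact h1

lemma hddSet_triple {a b c : E} (hab : a ≠ b) (hac : a ≠ c) (hbc : b ≠ c) :
    hddSet 2 {a, b, c} = {{a, b}, {a, c}, {b, c}} := by
  ext s
  simp only [hddSet, Finset.mem_filter, Finset.mem_powersetCard]
  constructor
  · rintro ⟨⟨hsub, hcard⟩, -⟩
    obtain ⟨x, y, hxy, rfl⟩ := Finset.card_eq_two.mp hcard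
    have hx : x ∈ ({a, b, c} : Finset E) := hsub (by simp)
    have hy : y ∈ ({a, b, c} : Finset E) := hsub (by simp)
    simp only [Finset.mem_insert, Finset.mem_singleton] at hx hy ⊢
    rcases hx with rfl | rfl | rfl <;> rcases hy with rfl | rfl | rfl <;>
      simp_all [Finset.pair_comm]
  · intro hs
    simp only [Finset.mem_insert, Finset.mem_singleton] at hs
    rcases hs with rfl | rfl | rfl
    · exact ⟨⟨by simp [Finset.insert_subset_iff], Finset.card_pair hab⟩, pair_indep hab⟩
    · exact ⟨⟨by simp [Finset.insert_subset_iff], Finset.card_pair hac⟩, pair_indep hac⟩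
    · exact ⟨⟨by simp [Finset.insert_subset_iff], Finset.card_pair hbc⟩, pair_indep hbc⟩

lemma pair_ne_pair_left {a b c : E} (hca : c ≠ a) (hcb : c ≠ b) :
    ({a, b} : Finset E) ≠ ({a, c} : Finset E) := by
  intro h
  have : c ∈ ({a, b} : Finset E) := by rw [h]; simp
  simp only [Finset.mem_insert, Finset.mem_singleton] at this
  tauto

lemma depth_triple {a b c : E} (hab : a ≠ b) (hac : a ≠ c) (hbc : b ≠ c) (x : E) :
    hddDepth 2 {a, b, c} x =
      infDist x (affineSpan ℝ ({a, b} : Set E) : Set E) +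
      infDist x (affineSpan ℝ ({a, c} : Set E) : Set E) +
      infDist x (affineSpan ℝ ({b, c} : Set E) : Set E) := by
  have h1 : ({a, b} : Finset E) ∉ ({{a, c}, {b, c}} : Finset (Finset E)) := by
    simp only [Finset.mem_insert, Finset.mem_singleton]
    push_neg
    constructor
    · intro h
      have : c ∈ ({a, b} : Finset E) := by rw [h]; simp
      simp only [Finset.mem_insert, Finset.mem_singleton] at this
      rcases this with h' | h' <;> [exact hac h'.symm; exact hbc h'.symm]
    · intro h
      have : c ∈ ({a, b} : Finset E) := by rw [h]; simp
      simp only [Finset.mem_insert, Finset.mem_singleton] at this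
      rcases this with h' | h' <;> [exact hac h'.symm; exact hbc h'.symm]
  have h2 : ({a, c} : Finset E) ∉ ({{b, c}} : Finset (Finset E)) := by
    simp only [Finset.mem_singleton]
    intro h
    have : a ∈ ({b, c} : Finset E) := by rw [← h]; simp
    simp only [Finset.mem_insert, Finset.mem_singleton] at this
    tauto
  rw [hddDepth, hddSet_triple hab hac hbc, Finset.sum_insert h1, Finset.sum_insert h2,
    Finset.sum_singleton]
  simp only [Finset.coe_insert, Finset.coe_singleton]
  ring

def Tmap : E ≃ₗ[ℝ] E where
  toFun v := pt (3 * v 0 + 4 * v 1) (3 * v 1)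
  invFun u := pt (u 0 / 3 - 4 / 9 * u 1) (u 1 / 3)
  left_inv v := by
    refine (E_ext ?_ ?_).symm <;> simp <;> ring
  right_inv u := by
    refine (E_ext ?_ ?_).symm <;> simp <;> ring
  map_add' x y := by
    apply E_ext <;> simp [PiLp.add_apply] <;> ring
  map_smul' r x := by
    apply E_ext <;> simp [PiLp.smul_apply, smul_eq_mul] <;> ring

lemma Tmap_pt (a b : ℝ) : Tmap (pt a b) = pt (3 * a + 4 * b) (3 * b) := rfl

lemma pt_congr {a b c d : ℝ} (h1 : a = c) (h2 : b = d) : pt a b = pt c d := by rw [h1, h2]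

lemma sqrt_helper {s v : ℝ} (hv : 0 ≤ v) (h : s = v ^ 2) : Real.sqrt s = v := by
  rw [h, Real.sqrt_sq hv]

lemma norm_pt_le_one {a b : ℝ} (h : a ^ 2 + b ^ 2 ≤ 1) : ‖(pt a b : E)‖ ≤ 1 := by
  rw [norm_pt]
  simp only [pt_zero, pt_one]
  calc Real.sqrt (a ^ 2 + b ^ 2) ≤ Real.sqrt 1 := Real.sqrt_le_sqrt h
  _ = 1 := Real.sqrt_one

/-- The HDD median is not equivariant under (invertible linear) affine transformations:
there are a finite set `P ⊆ ℝ²`, an invertible linear map `T`, and an HDD median `q` of `P`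
such that `T q` is not an HDD median of `T(P)`. -/
theorem hddMedian_not_affine_equivariant :
    ∃ (P : Finset (EuclideanSpace ℝ (Fin 2)))
      (T : EuclideanSpace ℝ (Fin 2) ≃ₗ[ℝ] EuclideanSpace ℝ (Fin 2))
      (q : EuclideanSpace ℝ (Fin 2)),
      (∀ x, hddDepth 2 P q ≤ hddDepth 2 P x) ∧
      ¬ (∀ x, hddDepth 2 (P.image T) (T q) ≤ hddDepth 2 (P.image T) x) := by
  have hab : (pt 0 0 : E) ≠ pt 4 0 := pt_ne_fst (by norm_num)
  have hac : (pt 0 0 : E) ≠ pt 0 3 := pt_ne_snd (by norm_num)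
  have hbc : (pt 4 0 : E) ≠ pt 0 3 := pt_ne_fst (by norm_num)
  refine ⟨{pt 0 0, pt 4 0, pt 0 3}, Tmap, pt 0 0, ?_, ?_⟩
  · intro x
    rw [depth_triple hab hac hbc, depth_triple hab hac hbc,
      infDist_span_pair_left, infDist_span_pair_left]
    -- upper bound for the depth at the origin
    have hA3 : infDist (pt 0 0) (affineSpan ℝ ({pt 4 0, pt 0 3} : Set E) : Set E) ≤ 12 / 5 := by
      have h := infDist_span_pair_le_foot (pt 4 0) (pt 0 3) (16 / 25) (pt 0 0)
      have hfoot : (16 / 25 : ℝ) • ((pt 0 3 : E) - pt 4 0) + pt 4 0 = pt (36/25) (48/25) := by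
        apply E_ext <;> simp [PiLp.smul_apply, PiLp.sub_apply, PiLp.add_apply] <;> norm_num
      rw [hfoot, dist_pt, sqrt_helper (v := 12 / 5) (by norm_num) (by norm_num)] at h
      exact h
    -- lower bounds for the depth at x
    have hx1 := infDist_span_pair_ge (pt 0 0) (pt 4 0) (pt 0 (4/5)) 0
      (norm_pt_le_one (by norm_num))
      (by rw [inner_pt]; norm_num) (by rw [inner_pt]; norm_num) x
    have hx2 := infDist_span_pair_ge (pt 0 0) (pt 0 3) (pt (3/5) 0) 0
      (norm_pt_le_one (by norm_num))
      (by rw [inner_pt]; norm_num) (by rw [inner_pt]; norm_num) x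
    have hx3 := infDist_span_pair_ge (pt 4 0) (pt 0 3) (pt (-3/5) (-4/5)) (-12/5)
      (norm_pt_le_one (by norm_num))
      (by rw [inner_pt]; norm_num) (by rw [inner_pt]; norm_num) x
    rw [inner_pt] at hx1 hx2 hx3
    simp only [pt_zero, pt_one] at hx1 hx2 hx3
    linarith
  · intro hall
    have ha'b' : (pt 0 0 : E) ≠ pt 12 0 := pt_ne_fst (by norm_num)
    have ha'c' : (pt 0 0 : E) ≠ pt 12 9 := pt_ne_fst (by norm_num)
    have hb'c' : (pt 12 0 : E) ≠ pt 12 9 := pt_ne_snd (by norm_num)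
    have himg : ({pt 0 0, pt 4 0, pt 0 3} : Finset E).image Tmap
        = {pt 0 0, pt 12 0, pt 12 9} := by
      rw [Finset.image_insert, Finset.image_insert, Finset.image_singleton,
        Tmap_pt, Tmap_pt, Tmap_pt]
      rw [pt_congr (by norm_num : (3:ℝ) * 0 + 4 * 0 = 0) (by norm_num : (3:ℝ) * 0 = 0),
        pt_congr (by norm_num : (3:ℝ) * 4 + 4 * 0 = 12) (by norm_num : (3:ℝ) * 0 = 0),
        pt_congr (by norm_num : (3:ℝ) * 0 + 4 * 3 = 12) (by norm_num : (3:ℝ) * 3 = 9)]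
    have hTq : Tmap (pt 0 0) = pt 0 0 := by
      rw [Tmap_pt]; exact pt_congr (by norm_num) (by norm_num)
    have hspec := hall (pt 12 0)
    rw [himg, hTq, depth_triple ha'b' ha'c' hb'c', depth_triple ha'b' ha'c' hb'c',
      infDist_span_pair_left (pt 0 0) (pt 12 0), infDist_span_pair_left (pt 0 0) (pt 12 9),
      infDist_span_pair_right (pt 0 0) (pt 12 0),
      infDist_span_pair_left (pt 12 0) (pt 12 9)] at hspec
    -- depth at T q = pt 0 0 is at least 12
    have hA3 := infDist_span_pair_ge (pt 12 0) (pt 12 9) (pt (-1) 0) (-12)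
      (norm_pt_le_one (by norm_num))
      (by rw [inner_pt]; norm_num) (by rw [inner_pt]; norm_num) (pt 0 0)
    rw [inner_pt] at hA3
    simp only [pt_zero, pt_one] at hA3
    -- depth at pt 12 0 is at most 36/5
    have hB2 : infDist (pt 12 0) (affineSpan ℝ ({pt 0 0, pt 12 9} : Set E) : Set E)
        ≤ 36 / 5 := by
      have h := infDist_span_pair_le_foot (pt 0 0) (pt 12 9) (16 / 25) (pt 12 0)
      have hfoot : (16 / 25 : ℝ) • ((pt 12 9 : E) - pt 0 0) + pt 0 0
          = pt (192/25) (144/25) := by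
        apply E_ext <;> simp [PiLp.smul_apply, PiLp.sub_apply, PiLp.add_apply] <;> norm_num
      rw [hfoot, dist_pt, sqrt_helper (v := 36 / 5) (by norm_num) (by norm_num)] at h
      exact h
    linarith

end
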